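/- Let F be a finite field of cardinality p^ℓ, 0 ≤ h < ℓ, and λ ∈ F^× with λ^{1+p^h} = 1, t the order of λ. Define, for a(X) = Σ aᵢXⁱ in R_λ = F[X]/⟨Xⁿ − λ⟩, a*(X) := Σ aᵢ^{p^h} X^{(nt−1)i} mod (Xⁿ − λ). Then the map a ↦ a* is a ring automorphism of R_λ that is σ_{p^h}-semilinear, i.e., (αa)* = α^{p^h} a* for α ∈ F, and it satisfies a*(P_λ) = (a(P_λ))^{*h}. -/

import Mathlib

open Polynomial Matrix

/-- The quotient ring `R_λ = F[X]/⟨Xⁿ − λ⟩`. -/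
abbrev Rlam (F : Type*) [Field F] (n : ℕ) (lam : F) :=
  F[X] ⧸ Ideal.span {(X : F[X]) ^ n - C lam}

/-- The `λ`-constacyclic permutation matrix of degree `n`. -/
def Pmat {F : Type*} [Field F] (n : ℕ) (lam : F) : Matrix (Fin n) (Fin n) F :=
  fun i j => if (i : ℕ) + 1 = (j : ℕ) then 1
    else if (i : ℕ) = n - 1 ∧ (j : ℕ) = 0 then lam else 0

namespace StmtAux

set_option linter.unusedSectionVars false

variable {F : Type*} [Field F]

/-- The polynomial-level map: apply `s` to coefficients, substitute `X^e` for `X`. -/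
noncomputable def phi (s : F →+* F) (e : ℕ) : F[X] →+* F[X] :=
  (eval₂RingHom C ((X : F[X]) ^ e)).comp (mapRingHom s)

lemma phi_monomial (s : F →+* F) (e k : ℕ) (a : F) :
    phi s e (monomial k a) = C (s a) * X ^ (e * k) := by
  simp [phi, eval₂_monomial, ← pow_mul]

lemma phi_C (s : F →+* F) (e : ℕ) (a : F) : phi s e (C a) = C (s a) := by
  simpa using phi_monomial s e 0 a

lemma phi_X (s : F →+* F) (e : ℕ) : phi s e X = X ^ e := by
  have := phi_monomial s e 1 1
  rw [monomial_one_one_eq_X] at this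
  simpa using this

lemma phi_apply (s : F →+* F) (e : ℕ) (f : F[X]) :
    phi s e f = f.sum fun i a => C (s a) * X ^ (e * i) := by
  induction f using Polynomial.induction_on' with
  | add p q hp hq =>
      rw [map_add, hp, hq, Polynomial.sum_add_index]
      · intro i; simp
      · intro i b₁ b₂; simp [add_mul]
  | monomial k a =>
      rw [phi_monomial, Polynomial.sum_monomial_index]
      simp

variable {n : ℕ} [NeZero n] {lam : F}

lemma mk_X_pow_n :
    Ideal.Quotient.mk (Ideal.span {(X : F[X]) ^ n - C lam}) (X ^ n) =
      Ideal.Quotient.mk _ (C lam) := by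
  rw [Ideal.Quotient.eq]
  exact Ideal.subset_span rfl

noncomputable def qhom (s : F →+* F) (e : ℕ) (hs : s lam = lam ^ e) :
    Rlam F n lam →+* Rlam F n lam :=
  Ideal.Quotient.lift _ ((Ideal.Quotient.mk _).comp (phi s e)) (by
    intro a ha
    rw [Ideal.mem_span_singleton] at ha
    obtain ⟨c, rfl⟩ := ha
    rw [RingHom.comp_apply, map_mul (phi s e), map_mul (Ideal.Quotient.mk _)]
    have hg : (Ideal.Quotient.mk (Ideal.span {(X : F[X]) ^ n - C lam}))
        (phi s e ((X : F[X]) ^ n - C lam)) = 0 := by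
      rw [map_sub, map_pow, phi_X, phi_C, hs, ← pow_mul,
        show e * n = n * e from mul_comm e n, pow_mul, map_sub, map_pow, mk_X_pow_n,
        ← map_pow, ← C_pow, sub_self]
    rw [hg, zero_mul])

lemma qhom_mk (s : F →+* F) (e : ℕ) (hs : s lam = lam ^ e) (f : F[X]) :
    qhom (n := n) s e hs (Ideal.Quotient.mk (Ideal.span {(X : F[X]) ^ n - C lam}) f) =
      Ideal.Quotient.mk _ (phi s e f) := rfl

lemma qhom_comp_id (s s' : F →+* F) (e e' : ℕ) (hs : s lam = lam ^ e)
    (hs' : s' lam = lam ^ e') (hss' : ∀ a, s' (s a) = a)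
    (hX : Ideal.Quotient.mk (Ideal.span {(X : F[X]) ^ n - C lam}) (X ^ (e' * e)) =
      Ideal.Quotient.mk _ X) :
    (qhom (n := n) s' e' hs').comp (qhom s e hs) = RingHom.id _ := by
  apply Ideal.Quotient.ringHom_ext
  apply Polynomial.ringHom_ext
  · intro a
    simp only [RingHom.comp_apply, RingHom.id_apply, qhom_mk, phi_C, hss']
  · simp only [RingHom.comp_apply, RingHom.id_apply, qhom_mk, phi_X, map_pow, phi_X]
    rw [← pow_mul, ← map_pow]
    exact hX

lemma transpose_aeval (M : Matrix (Fin n) (Fin n) F) (g : F[X]) :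
    (aeval M g)ᵀ = aeval Mᵀ g := by
  induction g using Polynomial.induction_on' with
  | add p q hp hq => rw [map_add, map_add, transpose_add, hp, hq]
  | monomial k a =>
      rw [aeval_monomial, aeval_monomial, transpose_mul, transpose_pow,
        Matrix.algebraMap_eq_diagonal, Matrix.diagonal_transpose,
        ← Matrix.algebraMap_eq_diagonal]
      exact (Algebra.commutes a _).symm

lemma map_aeval (s : F →+* F) (M : Matrix (Fin n) (Fin n) F) (g : F[X]) :
    (aeval M g).map s = aeval (M.map s) (g.map s) := by
  induction g using Polynomial.induction_on' with
  | add p q hp hq =>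
      rw [map_add, ← RingHom.mapMatrix_apply, map_add, RingHom.mapMatrix_apply,
        RingHom.mapMatrix_apply, hp, hq, Polynomial.map_add, map_add]
  | monomial k a =>
      rw [aeval_monomial, Polynomial.map_monomial, aeval_monomial,
        ← RingHom.mapMatrix_apply, _root_.map_mul, map_pow, RingHom.mapMatrix_apply,
        RingHom.mapMatrix_apply]
      congr 1
      rw [Matrix.algebraMap_eq_diagonal, Matrix.diagonal_map (map_zero s),
        Matrix.algebraMap_eq_diagonal]
      congr 1

lemma aeval_phi (s : F →+* F) (e : ℕ) (M : Matrix (Fin n) (Fin n) F) (f : F[X]) :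
    aeval M (phi s e f) = aeval (M ^ e) (f.map s) := by
  induction f using Polynomial.induction_on' with
  | add p q hp hq => rw [map_add, map_add, Polynomial.map_add, map_add, hp, hq]
  | monomial k a =>
      rw [phi_monomial, Polynomial.map_monomial, aeval_monomial, _root_.map_mul, aeval_C,
        map_pow, aeval_X, ← pow_mul]

lemma pmat_pow (lam : F) (k : ℕ) :
    (Pmat n lam) ^ k = Matrix.of (fun i j : Fin n =>
      if (j : ℕ) = ((i : ℕ) + k) % n then lam ^ (((i : ℕ) + k) / n) else 0) := by
  induction k with
  | zero =>
      ext i j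
      simp only [pow_zero, Matrix.one_apply, Matrix.of_apply, Nat.add_zero,
        Nat.mod_eq_of_lt i.isLt, Nat.div_eq_of_lt i.isLt, pow_zero]
      by_cases hij : i = j
      · simp [hij]
      · rw [if_neg hij, if_neg (by simpa [Fin.ext_iff, eq_comm] using hij)]
  | succ k ih =>
      ext i j
      rw [pow_succ, Matrix.mul_apply]
      set q := ((i : ℕ) + k) / n with hq
      set r := ((i : ℕ) + k) % n with hr
      have hn : 0 < n := Nat.pos_of_ne_zero (NeZero.ne n)
      have hrn : r < n := Nat.mod_lt _ hn
      have hdm : n * q + r = (i : ℕ) + k := Nat.div_add_mod _ n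
      have hstep : ∀ m : Fin n,
          (Matrix.of (fun i j : Fin n =>
            if (j : ℕ) = ((i : ℕ) + k) % n then lam ^ (((i : ℕ) + k) / n) else 0)) i m
            * Pmat n lam m j
          = if m = ⟨r, hrn⟩ then lam ^ q * Pmat n lam m j else 0 := by
        intro m
        rcases eq_or_ne m (⟨r, hrn⟩ : Fin n) with hm | hm
        · subst hm; simp [← hr, ← hq]
        · rw [Matrix.of_apply, if_neg (by simpa [Fin.ext_iff] using hm), if_neg hm, zero_mul]
      rw [ih]
      simp only [hstep]
      rw [Finset.sum_ite_eq' Finset.univ (⟨r, hrn⟩ : Fin n)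
        (fun m => lam ^ q * Pmat n lam m j), if_pos (Finset.mem_univ _)]
      show lam ^ q * Pmat n lam ⟨r, hrn⟩ j = _
      rcases eq_or_lt_of_le (Nat.succ_le_of_lt hrn) with hcase | hcase
      · -- r + 1 = n : wraparound
        have h1 : (i : ℕ) + (k + 1) = n * (q + 1) := by
          rw [Nat.mul_add, Nat.mul_one]; omega
        have hmod : ((i : ℕ) + (k + 1)) % n = 0 := by rw [h1]; exact Nat.mul_mod_right _ _
        have hdiv : ((i : ℕ) + (k + 1)) / n = q + 1 := by
          rw [h1]; exact Nat.mul_div_cancel_left _ hn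
        rw [Matrix.of_apply, hmod, hdiv]
        show lam ^ q * Pmat n lam ⟨r, hrn⟩ j = _
        unfold Pmat
        have hc1 : ¬ ((⟨r, hrn⟩ : Fin n) : ℕ) + 1 = (j : ℕ) := by
          have := j.isLt; simp only [Fin.val_mk]; omega
        have hc2 : ((⟨r, hrn⟩ : Fin n) : ℕ) = n - 1 := by simp only [Fin.val_mk]; omega
        rw [if_neg hc1]
        by_cases hj : (j : ℕ) = 0
        · rw [if_pos ⟨hc2, hj⟩, if_pos hj, pow_succ]
        · rw [if_neg (by tauto), if_neg hj, mul_zero]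
      · -- r + 1 < n : no wraparound
        have h1 : (i : ℕ) + (k + 1) = (r + 1) + n * q := by omega
        have hmod : ((i : ℕ) + (k + 1)) % n = r + 1 := by
          rw [h1, Nat.add_mul_mod_self_left, Nat.mod_eq_of_lt hcase]
        have hdiv : ((i : ℕ) + (k + 1)) / n = q := by
          rw [h1, Nat.add_mul_div_left _ _ hn, Nat.div_eq_of_lt hcase, Nat.zero_add]
        rw [Matrix.of_apply, hmod, hdiv]
        unfold Pmat
        have hc2 : ¬ (((⟨r, hrn⟩ : Fin n) : ℕ) = n - 1 ∧ (j : ℕ) = 0) := by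
          simp only [Fin.val_mk]; omega
        by_cases hj : (j : ℕ) = r + 1
        · rw [if_pos (by simp [hj]), if_pos hj, mul_one]
        · rw [if_neg (by simpa [eq_comm] using hj), if_neg hc2, mul_zero, if_neg hj]

lemma pmat_pow_eq (lam : F) (s : F →+* F) (ht : 0 < orderOf lam)
    (hslam : s lam = lam ^ (orderOf lam - 1)) :
    (Pmat n lam) ^ (n * orderOf lam - 1) = ((Pmat n lam).map s)ᵀ := by
  have hn : 0 < n := Nat.pos_of_ne_zero (NeZero.ne n)
  have hlamt : lam ^ orderOf lam = 1 := pow_orderOf_eq_one lam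
  obtain ⟨t', ht'⟩ : ∃ t', orderOf lam = t' + 1 := ⟨orderOf lam - 1, by omega⟩
  have hmul : n * orderOf lam = n * t' + n := by rw [ht', Nat.mul_add, Nat.mul_one]
  rw [pmat_pow]
  ext i j
  rw [Matrix.of_apply, Matrix.transpose_apply, Matrix.map_apply]
  unfold Pmat
  by_cases hi : (i : ℕ) = 0
  · -- row 0
    have h1 : (i : ℕ) + (n * orderOf lam - 1) = (n - 1) + n * t' := by omega
    have hmod : ((i : ℕ) + (n * orderOf lam - 1)) % n = n - 1 := by
      rw [h1, Nat.add_mul_mod_self_left, Nat.mod_eq_of_lt (by omega)]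
    have hdiv : ((i : ℕ) + (n * orderOf lam - 1)) / n = t' := by
      rw [h1, Nat.add_mul_div_left _ _ hn, Nat.div_eq_of_lt (by omega), Nat.zero_add]
    have hc1 : ¬ ((j : ℕ) + 1 = (i : ℕ)) := by omega
    rw [hmod, hdiv, if_neg hc1]
    have hsl : s lam = lam ^ t' := by rw [hslam, ht', Nat.add_sub_cancel]
    by_cases hj : (j : ℕ) = n - 1
    · rw [if_pos hj, if_pos ⟨hj, hi⟩, hsl]
    · rw [if_neg hj, if_neg (by tauto)]
      exact (map_zero s).symm
  · -- row ≥ 1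
    have h1 : (i : ℕ) + (n * orderOf lam - 1) = ((i : ℕ) - 1) + n * orderOf lam := by omega
    have hmod : ((i : ℕ) + (n * orderOf lam - 1)) % n = (i : ℕ) - 1 := by
      rw [h1, Nat.add_mul_mod_self_left, Nat.mod_eq_of_lt (by omega)]
    have hdiv : ((i : ℕ) + (n * orderOf lam - 1)) / n = orderOf lam := by
      rw [h1, Nat.add_mul_div_left _ _ hn, Nat.div_eq_of_lt (by omega), Nat.zero_add]
    rw [hmod, hdiv, hlamt]
    have hc2 : ¬ ((j : ℕ) = n - 1 ∧ (i : ℕ) = 0) := by tauto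
    by_cases hj : (j : ℕ) = (i : ℕ) - 1
    · rw [if_pos hj, if_pos (by omega : (j : ℕ) + 1 = (i : ℕ))]
      exact (map_one s).symm
    · rw [if_neg hj, if_neg (by omega : ¬ ((j : ℕ) + 1 = (i : ℕ))), if_neg hc2]
      exact (map_zero s).symm

end StmtAux

theorem stmt_5 {F : Type*} [Field F] [Fintype F] {p ℓ h n : ℕ} [NeZero n]
    (hp : p.Prime) (hcard : Fintype.card F = p ^ ℓ) (hh : h < ℓ)
    (lam : F) (hlam : lam ≠ 0) (hlam1 : lam ^ (1 + p ^ h) = 1) :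
    ∃ ψ : Rlam F n lam ≃+* Rlam F n lam,
      (∀ f : F[X],
        ψ (Ideal.Quotient.mk _ f) =
          Ideal.Quotient.mk _
            (f.sum fun i a => C (a ^ p ^ h) * X ^ ((n * orderOf lam - 1) * i))) ∧
      (∀ (α : F) (a : Rlam F n lam),
        ψ (algebraMap F (Rlam F n lam) α * a) =
          algebraMap F (Rlam F n lam) (α ^ p ^ h) * ψ a) ∧
      (∀ f : F[X],
        aeval (Pmat n lam)
            (f.sum fun i a => C (a ^ p ^ h) * X ^ ((n * orderOf lam - 1) * i)) =
          ((aeval (Pmat n lam) f).map (fun x => x ^ p ^ h))ᵀ) := by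
  classical
  have hn : 0 < n := Nat.pos_of_ne_zero (NeZero.ne n)
  have hell : 0 < ℓ := lt_of_le_of_lt (Nat.zero_le h) hh
  -- characteristic
  haveI hchar : CharP F p := by
    obtain ⟨q, hq⟩ := CharP.exists F
    haveI := hq
    have hqprime : q.Prime := CharP.char_is_prime F q
    obtain ⟨m, _, hcard'⟩ := FiniteField.card F q
    have hpq : p = q := by
      have hdvd : p ∣ q ^ (m : ℕ) := by
        rw [← hcard', hcard]
        exact dvd_pow_self p hell.ne'
      exact (Nat.prime_dvd_prime_iff_eq hp hqprime).mp (hp.dvd_of_dvd_pow hdvd)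
    subst hpq; exact hq
  haveI : ExpChar F p := ExpChar.prime hp
  -- the order of lam
  have hcard1 : 1 < Fintype.card F := Fintype.one_lt_card
  have hfin : IsOfFinOrder lam := isOfFinOrder_iff_pow_eq_one.mpr
    ⟨Fintype.card F - 1, by omega, FiniteField.pow_card_sub_one_eq_one lam hlam⟩
  have ht : 0 < orderOf lam := orderOf_pos_iff.mpr hfin
  have hlamt : lam ^ orderOf lam = 1 := pow_orderOf_eq_one lam
  have hnt : 1 ≤ n * orderOf lam := Nat.one_le_iff_ne_zero.mpr (by positivity)
  set e := n * orderOf lam - 1 with hedef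
  -- the two Frobenius-type maps
  set s := iterateFrobenius F p h with hsdef
  set s' := iterateFrobenius F p (ℓ - h) with hs'def
  have hs_app : ∀ x : F, s x = x ^ p ^ h := fun x => iterateFrobenius_def p h x
  have hs'_app : ∀ x : F, s' x = x ^ p ^ (ℓ - h) := fun x => iterateFrobenius_def p (ℓ - h) x
  have hpow_card : ∀ x : F, x ^ p ^ ℓ = x := fun x => by
    rw [← hcard]; exact FiniteField.pow_card x
  have hss' : ∀ x : F, s' (s x) = x := fun x => by
    rw [hs_app, hs'_app, ← pow_mul, ← pow_add, Nat.add_sub_cancel' (le_of_lt hh), hpow_card]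
  have hs's : ∀ x : F, s (s' x) = x := fun x => by
    rw [hs'_app, hs_app, ← pow_mul, ← pow_add, Nat.sub_add_cancel (le_of_lt hh), hpow_card]
  -- relations for lam
  have hinv : lam * lam ^ p ^ h = 1 := by
    have := hlam1; rwa [pow_add, pow_one] at this
  have hlame : lam ^ e * lam = 1 := by
    have h1 : lam ^ (e + 1) = 1 := by
      rw [show e + 1 = n * orderOf lam from by omega, mul_comm, pow_mul, hlamt, one_pow]
    rwa [pow_succ] at h1
  have hs_lam : s lam = lam ^ e := by
    apply mul_right_cancel₀ hlam
    rw [hs_app, hlame, mul_comm]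
    exact hinv
  have hs'_lam : s' lam = lam ^ e := by
    apply mul_right_cancel₀ hlam
    rw [hlame]
    have h2 := congrArg s' hinv
    rwa [_root_.map_mul, _root_.map_one, ← hs_app lam, hss'] at h2
  have hslam_t : s lam = lam ^ (orderOf lam - 1) := by
    apply mul_right_cancel₀ hlam
    rw [hs_app, mul_comm (lam ^ p ^ h) lam, hinv, ← pow_succ,
      show orderOf lam - 1 + 1 = orderOf lam from by omega, hlamt]
  -- the quotient ring homs
  set Φ := StmtAux.qhom (n := n) s e hs_lam with hΦ
  set Φ' := StmtAux.qhom (n := n) s' e hs'_lam with hΦ'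
  have hXnt : (Ideal.Quotient.mk (Ideal.span {(X : F[X]) ^ n - C lam}))
      (X ^ (n * orderOf lam)) = 1 := by
    rw [pow_mul, map_pow, StmtAux.mk_X_pow_n, ← map_pow, ← C_pow, hlamt, C_1, _root_.map_one]
  have hXe : (Ideal.Quotient.mk (Ideal.span {(X : F[X]) ^ n - C lam})) (X ^ (e * e)) =
      Ideal.Quotient.mk _ X := by
    rcases Nat.lt_or_ge (n * orderOf lam) 2 with hm | hm
    · have h1 : n * orderOf lam = 1 := by omega
      have he0 : e = 0 := by omega
      rw [h1, pow_one] at hXnt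
      rw [he0, Nat.mul_zero, pow_zero, _root_.map_one, hXnt]
    · obtain ⟨k, hk⟩ : ∃ k, n * orderOf lam = k + 2 := ⟨n * orderOf lam - 2, by omega⟩
      have hek : e = k + 1 := by omega
      have he2 : e * e = (n * orderOf lam) * k + 1 := by rw [hek, hk]; ring
      rw [he2, pow_add, pow_mul, pow_one, map_mul (Ideal.Quotient.mk _), map_pow, hXnt,
        one_pow, one_mul]
  have hcomp1 : Φ'.comp Φ = RingHom.id _ :=
    StmtAux.qhom_comp_id s s' e e hs_lam hs'_lam hss' hXe
  have hcomp2 : Φ.comp Φ' = RingHom.id _ :=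
    StmtAux.qhom_comp_id s' s e e hs'_lam hs_lam hs's hXe
  refine ⟨RingEquiv.ofRingHom Φ Φ' hcomp2 hcomp1, ?_, ?_, ?_⟩
  · intro f
    rw [RingEquiv.ofRingHom_apply, hΦ, StmtAux.qhom_mk, StmtAux.phi_apply]
    simp only [hs_app]
  · intro α a
    have hψC : ∀ b : F, (RingEquiv.ofRingHom Φ Φ' hcomp2 hcomp1)
        (algebraMap F (Rlam F n lam) b) = algebraMap F (Rlam F n lam) (b ^ p ^ h) := by
      intro b
      have halg : ∀ b : F, algebraMap F (Rlam F n lam) b =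
          Ideal.Quotient.mk (Ideal.span {(X : F[X]) ^ n - C lam}) (C b) := fun _ => rfl
      rw [RingEquiv.ofRingHom_apply, halg, halg, hΦ, StmtAux.qhom_mk, StmtAux.phi_C, hs_app]
    rw [_root_.map_mul, hψC]
  · intro f
    have hsfun : (fun x : F => x ^ p ^ h) = ⇑s := by funext x; rw [hs_app]
    have h1 : (f.sum fun i a => C (a ^ p ^ h) * X ^ (e * i)) = StmtAux.phi s e f := by
      rw [StmtAux.phi_apply]; simp only [hs_app]
    rw [hsfun, h1, StmtAux.aeval_phi,
      show (Pmat n lam) ^ e = ((Pmat n lam).map s)ᵀ from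
        hedef ▸ StmtAux.pmat_pow_eq lam s ht hslam_t,
      ← StmtAux.transpose_aeval, ← StmtAux.map_aeval]
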